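/- In A(T), the level sets G_n are invariant under automorphisms: a ∈ G_n if and only if f_{id_n}(a) = a and for all m < n, f_{id_m}(a) ≠ a. -/

import Mathlib

def IsTree (T : Set (List ℕ)) : Prop :=
  [] ∈ T ∧ ∀ (l : List ℕ) (x : ℕ), l ++ [x] ∈ T → l ∈ T

/-- The predecessor map `p` on finite sets of sequences: `t* ∈ p(a)` iff the number of
successors of `t*` belonging to `a` is odd. -/
def pstep (a : Finset (List ℕ)) : Finset (List ℕ) :=
  (a.image List.dropLast).filter
    (fun t => Odd ((a.filter (fun s => s.dropLast = t)).card))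

/-- An element of the structure `A(T)`: a level `n` together with a finite set of
level-`n` nodes. -/
def El : Type := ℕ × Finset (List ℕ)

/-- `El.valid T x` says that `x` really is an element of `G_n` for `n = x.1`:
all of its members are nodes of `T` of length `x.1`. -/
def El.valid (T : Set (List ℕ)) (x : El) : Prop :=
  ∀ σ ∈ x.2, σ ∈ T ∧ σ.length = x.1

/-- The interpretation of the named function `f_a` of `A(T)` applied to `b`:
with `a ∈ G_m`, `b ∈ G_n` and `k = min(m,n)`, `f_a(b) = p^{m-k}(a) Δ p^{n-k}(b)`. -/
def Ffun (a b : El) : El :=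
  (min a.1 b.1,
    symmDiff (pstep^[a.1 - min a.1 b.1] a.2) (pstep^[b.1 - min a.1 b.1] b.2))

/-- In `A(T)`, the level sets `G_n` are definable from the functions `f_{id_n}` (and
hence invariant under automorphisms): an element `x` lies in `G_n` if and only if
`f_{id_n}(x) = x` and `f_{id_m}(x) ≠ x` for all `m < n`. -/
theorem level_definable (T : Set (List ℕ)) (hT : IsTree T) (x : El)
    (hx : El.valid T x) (n : ℕ) :
    x.1 = n ↔
      (Ffun (n, (∅ : Finset (List ℕ))) x = x ∧
        ∀ m < n, Ffun (m, (∅ : Finset (List ℕ))) x ≠ x) := by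
  obtain ⟨k, s⟩ := x
  constructor
  · rintro rfl
    refine ⟨?_, ?_⟩
    · simp [Ffun, symmDiff_def, Finset.empty_union, Finset.sdiff_empty, Finset.empty_sdiff]; rfl
    · intro m hm h
      have := congrArg Prod.fst h
      simp [Ffun] at this
      omega
  · rintro ⟨h1, h2⟩
    have hk : min n k = k := congrArg Prod.fst h1
    by_contra hne
    have hlt : k < n := by omega
    exact h2 k hlt (by simp [Ffun, symmDiff_def, Finset.empty_union, Finset.sdiff_empty, Finset.empty_sdiff]; rfl)
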